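/- Let f : ℝⁿ → ℝ be differentiable with gradient g = ∇f, let μ > 0, fix x ∈ ℝⁿ and a symmetric positive definite n×n matrix H. Define ℓ(y) = f(x) + g(x)ᵀ(y − x) + μ‖y‖₁ and q(y) = ℓ(y) + ½(y − x)ᵀH(y − x). If ȳ is a minimizer of q over ℝⁿ, then q(x) − q(ȳ) ≥ ½(ℓ(x) − ℓ(ȳ)). -/

import Mathlib

open scoped RealInnerProductSpace

variable {n : ℕ}
local notation "E" => EuclideanSpace ℝ (Fin n)
local notation "CLM" => Matrix.toEuclideanCLM (𝕜 := ℝ)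

lemma aux_nonneg {H : Matrix (Fin n) (Fin n) ℝ} (hpd : H.PosDef)
    (v : EuclideanSpace ℝ (Fin n)) : 0 ≤ ⟪v, CLM H v⟫ := by
  have h := hpd.posSemidef.re_dotProduct_nonneg (WithLp.equiv _ _ v)
  rw [EuclideanSpace.inner_eq_star_dotProduct, Matrix.ofLp_toEuclideanCLM]
  simpa [dotProduct_comm] using h

/-- if `ȳ` minimizes `q`, then `q(x) - q(ȳ) ≥ ½(ℓ(x) - ℓ(ȳ))`. -/
theorem stmt_16
    (f : E → ℝ) (g : E → E)
    (hg : ∀ y, HasGradientAt f (g y) y)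
    (μ : ℝ) (hμ : 0 < μ)
    (x : E)
    (H : Matrix (Fin n) (Fin n) ℝ) (hpd : H.PosDef)
    (ℓ q : E → ℝ)
    (hℓ : ∀ y, ℓ y = f x + ⟪g x, y - x⟫ + μ * ∑ i, |y i|)
    (hq : ∀ y, q y = ℓ y + (1 / 2) * ⟪y - x, CLM H (y - x)⟫)
    (ybar : E) (hmin : ∀ z, q ybar ≤ q z) :
    q x - q ybar ≥ (1 / 2) * (ℓ x - ℓ ybar) := by
  set Q : ℝ := ⟪ybar - x, CLM H (ybar - x)⟫ with hQ
  have hQ0 : 0 ≤ Q := aux_nonneg hpd _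
  have hqx : q x = ℓ x := by
    rw [hq]; simp
  have hqy : q ybar = ℓ ybar + (1/2) * Q := hq ybar
  -- key: for t ∈ [0,1), ℓ x - ℓ ybar ≥ (1/2)*(1+t)*Q
  have key : ∀ t : ℝ, 0 ≤ t → t < 1 → (1/2)*(1+t)*Q ≤ ℓ x - ℓ ybar := by
    intro t ht0 ht1
    set z : E := x + t • (ybar - x) with hz
    have hzx : z - x = t • (ybar - x) := by simp [hz]
    have hquad : ⟪z - x, CLM H (z - x)⟫ = t^2 * Q := by
      rw [hzx, map_smul, real_inner_smul_left, real_inner_smul_right, hQ]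
      ring
    -- convexity of ℓ along the segment
    have hconv : ℓ z ≤ (1 - t) * ℓ x + t * ℓ ybar := by
      rw [hℓ, hℓ, hℓ]
      have hlin : ⟪g x, z - x⟫ = t * ⟪g x, ybar - x⟫ := by
        rw [hzx, real_inner_smul_right]
      have habs : ∑ i, |z i| ≤ (1 - t) * ∑ i, |x i| + t * ∑ i, |ybar i| := by
        rw [Finset.mul_sum, Finset.mul_sum, ← Finset.sum_add_distrib]
        apply Finset.sum_le_sum
        intro i _
        have : z i = (1 - t) * x i + t * ybar i := by
          simp [hz, PiLp.add_apply, PiLp.smul_apply, PiLp.sub_apply, smul_eq_mul]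
          ring
        rw [this]
        calc |(1 - t) * x i + t * ybar i| ≤ |(1 - t) * x i| + |t * ybar i| := abs_add_le _ _
          _ = (1 - t) * |x i| + t * |ybar i| := by
              rw [abs_mul, abs_mul, abs_of_nonneg (by linarith), abs_of_nonneg ht0]
      have hself : (⟪g x, x - x⟫ : ℝ) = 0 := by simp
      nlinarith [mul_le_mul_of_nonneg_left habs hμ.le]
    have hmz := hmin z
    rw [hq z, hqy, hquad] at hmz
    -- ℓ ybar + Q/2 ≤ ℓ z + t²Q/2 ≤ (1-t)ℓx + tℓy + t²Q/2
    nlinarith [hmz, hconv]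
  -- conclude ℓ x - ℓ ybar ≥ Q
  have hfinal : Q ≤ ℓ x - ℓ ybar := by
    by_contra hc
    push_neg at hc
    have h0 := key 0 le_rfl one_pos
    have hQpos : 0 < Q := by nlinarith
    have ht0 : 0 ≤ (ℓ x - ℓ ybar) / Q := div_nonneg (by linarith) hQpos.le
    have ht1 : (ℓ x - ℓ ybar) / Q < 1 := (div_lt_one hQpos).mpr hc
    have h2 := key _ ht0 ht1
    have hmul : (ℓ x - ℓ ybar) / Q * Q = ℓ x - ℓ ybar := div_mul_cancel₀ _ hQpos.ne'
    nlinarith [h2, hmul]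
  rw [hqx, hqy]
  linarith
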